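/- Let ρ ∈ (0,1) and let S ∈ ℝ^{m×n} be any matrix such that ‖C_S − I_d‖₂ ≤ √ρ. Then for any x_0 ∈ ℝ^d, the iterative Hessian sketch iterates x_{t+1} = x_t − (1−ρ) · H_S⁻¹ ∇f(x_t) satisfy δ_{x_t} ≤ ρ^t · δ_{x_0} for all t ≥ 0. -/

import Mathlib

open Matrix MeasureTheory ProbabilityTheory Real Polynomial
open scoped Classical

noncomputable section

/-- Spectral (operator) norm of a real matrix, via its action on Euclidean space. -/
def matSpectralNorm {k l : ℕ} (M : Matrix (Fin k) (Fin l) ℝ) : ℝ :=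
  ‖LinearMap.toContinuousLinearMap (Matrix.toEuclideanLin M)‖

/-- Positive semidefinite square root of a matrix (junk value `0` if `M` is not
positive semidefinite). -/
def msqrt {d : ℕ} (M : Matrix (Fin d) (Fin d) ℝ) : Matrix (Fin d) (Fin d) ℝ :=
  if h : M.PosSemidef then
    (h.1.eigenvectorUnitary : Matrix (Fin d) (Fin d) ℝ) *
      diagonal ((RCLike.ofReal : ℝ → ℝ) ∘ Real.sqrt ∘ h.1.eigenvalues) *
      (star h.1.eigenvectorUnitary : Matrix (Fin d) (Fin d) ℝ)
  else 0

/-- The Hessian `H = Aᵀ A + ν² Λ`. -/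
def Hmat {n d : ℕ} (A : Matrix (Fin n) (Fin d) ℝ) (ν : ℝ)
    (Λ : Matrix (Fin d) (Fin d) ℝ) : Matrix (Fin d) (Fin d) ℝ :=
  Aᵀ * A + ν ^ 2 • Λ

/-- The sketched Hessian `H_S = Aᵀ Sᵀ S A + ν² Λ`. -/
def HSmat {n d m : ℕ} (A : Matrix (Fin n) (Fin d) ℝ) (ν : ℝ)
    (Λ : Matrix (Fin d) (Fin d) ℝ) (S : Matrix (Fin m) (Fin n) ℝ) :
    Matrix (Fin d) (Fin d) ℝ :=
  Aᵀ * Sᵀ * S * A + ν ^ 2 • Λ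

/-- `C_S = H^{-1/2} H_S H^{-1/2}`. -/
def CSmat {n d m : ℕ} (A : Matrix (Fin n) (Fin d) ℝ) (ν : ℝ)
    (Λ : Matrix (Fin d) (Fin d) ℝ) (S : Matrix (Fin m) (Fin n) ℝ) :
    Matrix (Fin d) (Fin d) ℝ :=
  (msqrt (Hmat A ν Λ))⁻¹ * HSmat A ν Λ S * (msqrt (Hmat A ν Λ))⁻¹

/-- The minimizer `x* = H⁻¹ b`. -/
def xstar {n d : ℕ} (A : Matrix (Fin n) (Fin d) ℝ) (ν : ℝ)
    (Λ : Matrix (Fin d) (Fin d) ℝ) (b : Fin d → ℝ) : Fin d → ℝ :=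
  (Hmat A ν Λ)⁻¹.mulVec b

/-- The gradient `∇f(x) = H x - b`. -/
def gradf {n d : ℕ} (A : Matrix (Fin n) (Fin d) ℝ) (ν : ℝ)
    (Λ : Matrix (Fin d) (Fin d) ℝ) (b : Fin d → ℝ) (x : Fin d → ℝ) : Fin d → ℝ :=
  (Hmat A ν Λ).mulVec x - b

/-- The exact error `δ_x = (1/2)(x - x*)ᵀ H (x - x*)`. -/
def deltaEx {n d : ℕ} (A : Matrix (Fin n) (Fin d) ℝ) (ν : ℝ)
    (Λ : Matrix (Fin d) (Fin d) ℝ) (b : Fin d → ℝ) (x : Fin d → ℝ) : ℝ :=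
  (1 / 2) * ((x - xstar A ν Λ b) ⬝ᵥ (Hmat A ν Λ).mulVec (x - xstar A ν Λ b))

/-- The approximate Newton decrement `δ̃_x = (1/2) ∇f(x)ᵀ H_S⁻¹ ∇f(x)`. -/
def deltaApx {n d m : ℕ} (A : Matrix (Fin n) (Fin d) ℝ) (ν : ℝ)
    (Λ : Matrix (Fin d) (Fin d) ℝ) (b : Fin d → ℝ)
    (S : Matrix (Fin m) (Fin n) ℝ) (x : Fin d → ℝ) : ℝ :=
  (1 / 2) * (gradf A ν Λ b x ⬝ᵥ (HSmat A ν Λ S)⁻¹.mulVec (gradf A ν Λ b x))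

/-! ### Auxiliary lemmas -/

lemma key_ineq {d : ℕ} (B : Matrix (Fin d) (Fin d) ℝ) (ρ : ℝ) (hρ1 : ρ ≤ 1)
    (hB : ∀ v : Fin d → ℝ, (B *ᵥ v) ⬝ᵥ (B *ᵥ v) ≤ ρ * (v ⬝ᵥ v)) (v : Fin d → ℝ) :
    ((B + ρ • 1) *ᵥ v) ⬝ᵥ ((B + ρ • 1) *ᵥ v) ≤ ρ * (((B + 1) *ᵥ v) ⬝ᵥ ((B + 1) *ᵥ v)) := by
  have h := hB v
  have hcomm : (B *ᵥ v) ⬝ᵥ v = v ⬝ᵥ (B *ᵥ v) := dotProduct_comm _ _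
  simp only [add_mulVec, smul_mulVec, one_mulVec, dotProduct_add, add_dotProduct,
    dotProduct_smul, smul_dotProduct, smul_eq_mul]
  nlinarith [h, hcomm]

lemma dot_self_eq {k : ℕ} (w : Fin k → ℝ) :
    w ⬝ᵥ w = ‖(WithLp.equiv 2 (Fin k → ℝ)).symm w‖ ^ 2 := by
  rw [← real_inner_self_eq_norm_sq]
  simp [PiLp.inner_apply, dotProduct, RCLike.inner_apply, mul_comm]
  rw [EuclideanSpace.norm_eq, Real.sq_sqrt (by positivity)]
  simp [sq, Real.norm_eq_abs, abs_mul_abs_self]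

lemma spectral_bound {d : ℕ} (M : Matrix (Fin d) (Fin d) ℝ) (v : Fin d → ℝ) :
    (M *ᵥ v) ⬝ᵥ (M *ᵥ v) ≤ (matSpectralNorm M) ^ 2 * (v ⬝ᵥ v) := by
  have h := (LinearMap.toContinuousLinearMap (Matrix.toEuclideanLin M)).le_opNorm
    ((WithLp.equiv 2 (Fin d → ℝ)).symm v)
  simp only [LinearMap.coe_toContinuousLinearMap',
    Matrix.toEuclideanLin_apply_piLp_toLp] at h
  rw [dot_self_eq, dot_self_eq v]
  calc ‖(WithLp.equiv 2 (Fin d → ℝ)).symm (M *ᵥ v)‖ ^ 2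
      ≤ (matSpectralNorm M * ‖(WithLp.equiv 2 (Fin d → ℝ)).symm v‖) ^ 2 :=
        pow_le_pow_left₀ (norm_nonneg _) h 2
    _ = matSpectralNorm M ^ 2 * ‖(WithLp.equiv 2 (Fin d → ℝ)).symm v‖ ^ 2 := by ring

lemma smul_posDef {d : ℕ} {Λ : Matrix (Fin d) (Fin d) ℝ} (hΛ : Λ.PosDef) {c : ℝ} (hc : 0 < c) :
    (c • Λ).PosDef := by
  refine Matrix.PosDef.of_dotProduct_mulVec_pos ?_ fun x hx => ?_
  · have h1 : Λᵀ = Λ := by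
      have := hΛ.1.eq
      rwa [conjTranspose_eq_transpose_of_trivial] at this
    unfold Matrix.IsHermitian
    rw [conjTranspose_eq_transpose_of_trivial, transpose_smul, h1]
  · rw [smul_mulVec, dotProduct_smul, smul_eq_mul]
    exact mul_pos hc (hΛ.dotProduct_mulVec_pos hx)

lemma lambda_posDef {d : ℕ} {Λ : Matrix (Fin d) (Fin d) ℝ} (hΛ : (Λ - 1).PosSemidef) :
    Λ.PosDef := by
  have h : Λ = (Λ - 1) + 1 := by abel
  rw [h]
  exact Matrix.PosDef.posSemidef_add hΛ Matrix.PosDef.one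

lemma transpose_mul_self_psd {n d : ℕ} (A : Matrix (Fin n) (Fin d) ℝ) :
    (Aᵀ * A).PosSemidef := by
  have := Matrix.posSemidef_conjTranspose_mul_self A
  rwa [conjTranspose_eq_transpose_of_trivial] at this

lemma H_posDef {n d : ℕ} (A : Matrix (Fin n) (Fin d) ℝ) {ν : ℝ} (hν : 0 < ν)
    {Λ : Matrix (Fin d) (Fin d) ℝ} (hΛ : (Λ - 1).PosSemidef) :
    (Hmat A ν Λ).PosDef :=
  Matrix.PosDef.posSemidef_add (transpose_mul_self_psd A)
    (smul_posDef (lambda_posDef hΛ) (by positivity))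

lemma HS_posDef {n d m : ℕ} (A : Matrix (Fin n) (Fin d) ℝ) (S : Matrix (Fin m) (Fin n) ℝ)
    {ν : ℝ} (hν : 0 < ν) {Λ : Matrix (Fin d) (Fin d) ℝ} (hΛ : (Λ - 1).PosSemidef) :
    (HSmat A ν Λ S).PosDef := by
  have h : Aᵀ * Sᵀ * S * A = (S * A)ᵀ * (S * A) := by
    rw [transpose_mul, Matrix.mul_assoc]
  rw [HSmat, h]
  exact Matrix.PosDef.posSemidef_add (transpose_mul_self_psd (S * A))
    (smul_posDef (lambda_posDef hΛ) (by positivity))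

lemma msqrt_spec {d : ℕ} {H : Matrix (Fin d) (Fin d) ℝ} (hH : H.PosSemidef) :
    msqrt H * msqrt H = H ∧ (msqrt H).PosSemidef := by
  rw [msqrt, dif_pos hH]
  set U : Matrix (Fin d) (Fin d) ℝ := (hH.1.eigenvectorUnitary : Matrix (Fin d) (Fin d) ℝ) with hU
  set sU : Matrix (Fin d) (Fin d) ℝ := (star hH.1.eigenvectorUnitary : Matrix (Fin d) (Fin d) ℝ)
    with hsU
  have hUU : sU * U = 1 := Unitary.coe_star_mul_self _
  have hs : sU = Uᴴ := by rw [hsU, star_eq_conjTranspose]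
  set D := diagonal ((RCLike.ofReal : ℝ → ℝ) ∘ Real.sqrt ∘ hH.1.eigenvalues) with hDdef
  have hspec := hH.1.spectral_theorem
  rw [Unitary.conjStarAlgAut_apply] at hspec
  constructor
  · have hD : D * D = diagonal ((RCLike.ofReal : ℝ → ℝ) ∘ hH.1.eigenvalues) := by
      rw [hDdef, diagonal_mul_diagonal]
      congr 1
      funext i
      simp [Real.mul_self_sqrt (hH.eigenvalues_nonneg i)]
    conv_rhs => rw [hspec]
    rw [show U * D * sU * (U * D * sU) = U * (D * (sU * U) * D) * sU by
      simp only [Matrix.mul_assoc], hUU, Matrix.mul_one, hD]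
  · rw [hs]
    exact (posSemidef_diagonal_iff.mpr (by intro i; simp [Real.sqrt_nonneg])).mul_mul_conjTranspose_same U

lemma sqrt_posDef {d : ℕ} {H : Matrix (Fin d) (Fin d) ℝ} (hH : H.PosDef) :
    (msqrt H).PosDef := by
  set M := msqrt H with hMdef
  have hM : M.PosSemidef := (msqrt_spec hH.posSemidef).2
  have hMM : M * M = H := (msqrt_spec hH.posSemidef).1
  refine Matrix.PosDef.of_dotProduct_mulVec_pos hM.1 fun x hx =>
    lt_of_le_of_ne (hM.dotProduct_mulVec_nonneg x) fun heq => ?_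
  have h0 : M *ᵥ x = 0 := (hM.dotProduct_mulVec_zero_iff x).mp heq.symm
  have hz : H *ᵥ x = 0 := by rw [← hMM, ← mulVec_mulVec, h0, mulVec_zero]
  have hpos := hH.dotProduct_mulVec_pos hx
  rw [hz, dotProduct_zero] at hpos
  exact lt_irrefl 0 hpos

/-- If `‖C_S - I‖₂ ≤ √ρ` with `ρ ∈ (0,1)`, the IHS iterates
`x_{t+1} = x_t - (1-ρ)·H_S⁻¹∇f(x_t)` satisfy `δ_{x_t} ≤ ρ^t · δ_{x_0}`. -/
theorem stmt5 {n d m : ℕ} (hd : 1 ≤ d) (hdn : d ≤ n)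
    (A : Matrix (Fin n) (Fin d) ℝ) (b : Fin d → ℝ)
    (Λ : Matrix (Fin d) (Fin d) ℝ) (hΛdiag : Λ.IsDiag)
    (hΛ : (Λ - 1).PosSemidef) (ν : ℝ) (hν : 0 < ν)
    (ρ : ℝ) (hρ : ρ ∈ Set.Ioo (0 : ℝ) 1)
    (S : Matrix (Fin m) (Fin n) ℝ)
    (hS : matSpectralNorm (CSmat A ν Λ S - 1) ≤ Real.sqrt ρ)
    (x : ℕ → Fin d → ℝ)
    (hx : ∀ t : ℕ, x (t + 1) =
      x t - (1 - ρ) • (HSmat A ν Λ S)⁻¹.mulVec (gradf A ν Λ b (x t))) :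
    ∀ t : ℕ, deltaEx A ν Λ b (x t) ≤ ρ ^ t * deltaEx A ν Λ b (x 0) := by
  obtain ⟨hρ0, hρ1⟩ := hρ
  set H := Hmat A ν Λ with hHdef
  set HS := HSmat A ν Λ S with hHSdef
  have hH : H.PosDef := H_posDef A hν hΛ
  have hHS : HS.PosDef := HS_posDef A S hν hΛ
  set M := msqrt H with hMdef
  have hmsqrt : msqrt H = M := rfl
  have hMpd : M.PosDef := sqrt_posDef hH
  have hMT : Mᵀ = M := by
    have := hMpd.1.eq
    rwa [conjTranspose_eq_transpose_of_trivial] at this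
  have hMM : M * M = H := (msqrt_spec hH.posSemidef).1
  have hMd : IsUnit M.det := Matrix.isUnit_iff_isUnit_det M |>.mp hMpd.isUnit
  have hMinv : M * M⁻¹ = 1 := Matrix.mul_nonsing_inv M hMd
  have hinvM : M⁻¹ * M = 1 := Matrix.nonsing_inv_mul M hMd
  have hHd : IsUnit H.det := isUnit_iff_ne_zero.mpr hH.det_pos.ne'
  set C := CSmat A ν Λ S with hCdef
  have hCeq : C = M⁻¹ * HS * M⁻¹ := by rw [hCdef, CSmat, hmsqrt]
  have hHSeq : HS = M * C * M := by
    rw [hCeq, show M * (M⁻¹ * HS * M⁻¹) * M = (M * M⁻¹) * HS * (M⁻¹ * M) by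
      simp only [Matrix.mul_assoc], hMinv, hinvM, Matrix.one_mul, Matrix.mul_one]
  have hCd : IsUnit C.det := by
    have hdetC : C.det = M.det⁻¹ * HS.det * M.det⁻¹ := by
      rw [hCeq, det_mul, det_mul, det_nonsing_inv, Ring.inverse_eq_inv']
    rw [isUnit_iff_ne_zero, hdetC]
    have h1 := hH.det_pos
    have h2 := hHS.det_pos
    have h3 : (0:ℝ) < M.det := hMpd.det_pos
    positivity
  have hCinv : C * C⁻¹ = 1 := Matrix.mul_nonsing_inv C hCd
  have hHSinv : HS⁻¹ = M⁻¹ * (C⁻¹ * M⁻¹) := by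
    rw [hHSeq, Matrix.mul_inv_rev, Matrix.mul_inv_rev]
  -- gradient identity
  have hgrad : ∀ w : Fin d → ℝ, gradf A ν Λ b w = H *ᵥ (w - xstar A ν Λ b) := by
    intro w
    rw [gradf, xstar, mulVec_sub, mulVec_mulVec, Matrix.mul_nonsing_inv _ hHd, one_mulVec]
  -- quadratic form via M
  have hquad : ∀ w : Fin d → ℝ, w ⬝ᵥ H *ᵥ w = (M *ᵥ w) ⬝ᵥ (M *ᵥ w) := by
    intro w
    rw [← hMM, ← mulVec_mulVec, dotProduct_mulVec]
    have hvm : w ᵥ* M = M *ᵥ w := by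
      nth_rewrite 1 [← hMT]
      rw [vecMul_transpose]
    rw [hvm]
  -- spectral bound for B = C - 1
  set B := C - 1 with hBdef
  have hB : ∀ v : Fin d → ℝ, (B *ᵥ v) ⬝ᵥ (B *ᵥ v) ≤ ρ * (v ⬝ᵥ v) := by
    intro v
    have h1 := spectral_bound B v
    have h2 : matSpectralNorm B ^ 2 ≤ ρ := by
      have := pow_le_pow_left₀ (norm_nonneg _) hS 2
      rwa [Real.sq_sqrt hρ0.le] at this
    have h3 : (0:ℝ) ≤ v ⬝ᵥ v := by rw [dot_self_eq]; positivity
    nlinarith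
  -- one-step contraction
  have step : ∀ t : ℕ, deltaEx A ν Λ b (x (t+1)) ≤ ρ * deltaEx A ν Λ b (x t) := by
    intro t
    set e := x t - xstar A ν Λ b with he
    set v := C⁻¹ *ᵥ (M *ᵥ e) with hv
    have h1 : (B + 1) *ᵥ v = M *ᵥ e := by
      have hBC : B + 1 = C := by rw [hBdef]; abel
      rw [hBC, hv, mulVec_mulVec, mulVec_mulVec, hCinv, Matrix.one_mul]
    have hMv : M *ᵥ (HS⁻¹ *ᵥ (H *ᵥ e)) = v := by
      have hkey : M * HS⁻¹ * H = C⁻¹ * M := by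
        rw [hHSinv, ← hMM,
          show M * (M⁻¹ * (C⁻¹ * M⁻¹)) * (M * M) = (M * M⁻¹) * (C⁻¹ * ((M⁻¹ * M) * M)) by
            simp only [Matrix.mul_assoc], hMinv, hinvM, Matrix.one_mul, Matrix.one_mul]
      rw [mulVec_mulVec, mulVec_mulVec, hkey, ← mulVec_mulVec]
    have h2 : M *ᵥ (x (t+1) - xstar A ν Λ b) = (B + ρ • 1) *ᵥ v := by
      have hsub : x (t+1) - xstar A ν Λ b = e - (1 - ρ) • (HS⁻¹ *ᵥ (H *ᵥ e)) := by
        rw [hx t, hgrad (x t), he, sub_right_comm]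
      rw [hsub, mulVec_sub, mulVec_smul, hMv, ← h1]
      simp only [add_mulVec, smul_mulVec, one_mulVec]
      rw [sub_smul, one_smul]
      abel
    have hkey := key_ineq B ρ hρ1.le hB v
    rw [← h2, h1, ← hquad, ← hquad] at hkey
    rw [deltaEx, deltaEx, ← hHdef]
    calc (1/2 : ℝ) * ((x (t+1) - xstar A ν Λ b) ⬝ᵥ H *ᵥ (x (t+1) - xstar A ν Λ b))
        ≤ (1/2 : ℝ) * (ρ * ((x t - xstar A ν Λ b) ⬝ᵥ H *ᵥ (x t - xstar A ν Λ b))) := by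
          rw [← he]
          linarith
      _ = ρ * ((1/2 : ℝ) * ((x t - xstar A ν Λ b) ⬝ᵥ H *ᵥ (x t - xstar A ν Λ b))) := by ring
  -- induction
  intro t
  induction t with
  | zero => simp
  | succ t ih =>
    calc deltaEx A ν Λ b (x (t+1)) ≤ ρ * deltaEx A ν Λ b (x t) := step t
      _ ≤ ρ * (ρ ^ t * deltaEx A ν Λ b (x 0)) := by
          exact mul_le_mul_of_nonneg_left ih hρ0.le
      _ = ρ ^ (t+1) * deltaEx A ν Λ b (x 0) := by ring
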